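/- Assume all users have the common deadline T, i.e. d u = T for every u. Define Λ(A) as the maximum cardinality of a set B ⊆ {1,…,T} such that for every t ∈ {1,…,T}, |B ∩ {1,…,t}| ≤ ∑_{s=1}^{t} A s. Then the maximum of |S| over all feasible sets S of users equals the largest k ∈ {0,1,…,U} such that the sum of the k smallest values of ν (counted with multiplicity) is at most Λ(A). (Optimality of ALG-SCSB₂ for RAED-SCSB with common deadlines.) -/

import Mathlib

/-- A schedule `σ : ℕ → Option (Fin U)` serves the user set `S`:
(i) the users appearing in slots `{1,…,T}` are exactly those of `S`;
(ii) each `u ∈ S` appears in exactly `ν u` slots;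
(iii) every slot at which a user `u` appears is at most `d u`;
(iv) for every `t ∈ {1,…,T}`, the number of busy slots in `{1,…,t}` is at most
`∑_{s=1}^{t} A s`. -/
def Serves (T U : ℕ) (ν d : Fin U → ℕ) (A : ℕ → ℕ)
    (σ : ℕ → Option (Fin U)) (S : Finset (Fin U)) : Prop :=
  (∀ u : Fin U, u ∈ S ↔ ∃ t ∈ Finset.Icc 1 T, σ t = some u) ∧
  (∀ u ∈ S, ((Finset.Icc 1 T).filter (fun t => σ t = some u)).card = ν u) ∧
  (∀ u : Fin U, ∀ t ∈ Finset.Icc 1 T, σ t = some u → t ≤ d u) ∧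
  (∀ t ∈ Finset.Icc 1 T,
    ((Finset.Icc 1 t).filter (fun s => σ s ≠ none)).card ≤ ∑ s ∈ Finset.Icc 1 t, A s)

/-- A user set is feasible if some schedule serves it. -/
def Feasible (T U : ℕ) (ν d : Fin U → ℕ) (A : ℕ → ℕ) (S : Finset (Fin U)) : Prop :=
  ∃ σ : ℕ → Option (Fin U), Serves T U ν d A σ S

private lemma strictMono_le_apply {k : ℕ} {f : Fin k → ℕ} (hf : StrictMono f) :
    ∀ j : Fin k, (j : ℕ) ≤ f j := by
  intro ⟨j, hj⟩
  induction j with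
  | zero => exact Nat.zero_le _
  | succ n ih =>
    have h1 : (⟨n, Nat.lt_of_succ_lt hj⟩ : Fin k) < ⟨n + 1, hj⟩ := by
      simp [Fin.lt_def]
    have h2 := hf h1
    have h3 := ih (Nat.lt_of_succ_lt hj)
    simp only [Fin.val_mk] at h2 h3 ⊢
    omega

/-- sum of the `k` smallest values of a monotone function is at most the sum
over any `k`-element set. -/
private lemma sum_smallest_le {U k : ℕ} (g : Fin U → ℕ) (hg : Monotone g)
    (S : Finset (Fin U)) (hS : S.card = k) :
    ∑ i ∈ Finset.univ.filter (fun i : Fin U => (i : ℕ) < k), g i ≤ ∑ i ∈ S, g i := by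
  have hkU : k ≤ U := by
    rw [← hS]
    simpa using Finset.card_le_univ S
  have hmap : Finset.univ.filter (fun i : Fin U => (i : ℕ) < k)
      = Finset.map (Fin.castLEEmb hkU) Finset.univ := by
    ext i
    simp only [Finset.mem_filter, Finset.mem_univ, true_and, Finset.mem_map,
      Fin.castLEEmb, Function.Embedding.coeFn_mk]
    constructor
    · intro hi
      exact ⟨⟨(i : ℕ), hi⟩, by simp [Fin.castLE, Fin.ext_iff]⟩
    · rintro ⟨j, rfl⟩
      simpa using j.isLt
  rw [hmap, Finset.sum_map]
  have hiso := S.orderIsoOfFin hS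
  have hsum2 : ∑ i ∈ S, g i = ∑ j : Fin k, g ((hiso j : Fin U)) := by
    rw [← Finset.sum_attach S g]
    exact (Equiv.sum_comp hiso.toEquiv (fun x => g (x : Fin U))).symm
  rw [hsum2]
  apply Finset.sum_le_sum
  intro j _
  apply hg
  have hsm : StrictMono (fun j : Fin k => ((hiso j : Fin U) : ℕ)) := by
    intro a b hab
    have : hiso a < hiso b := hiso.strictMono hab
    exact_mod_cast this
  have := strictMono_le_apply hsm j
  simp only [Fin.le_def, Fin.castLEEmb, Function.Embedding.coeFn_mk]
  simpa using this

/-- Construction of a schedule filling exactly the slot set `B` with users of `S`. -/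
private lemma exists_schedule {T U : ℕ} (ν : Fin U → ℕ) :
    ∀ (S : Finset (Fin U)), ∀ B ⊆ Finset.Icc 1 T, B.card = ∑ u ∈ S, ν u →
    ∃ σ : ℕ → Option (Fin U), (∀ t, σ t ≠ none ↔ t ∈ B) ∧
      (∀ u : Fin U, ((Finset.Icc 1 T).filter (fun t => σ t = some u)).card
        = if u ∈ S then ν u else 0) := by
  intro S
  induction S using Finset.induction_on with
  | empty =>
    intro B hB hcard
    have hBe : B = ∅ := Finset.card_eq_zero.mp (by simpa using hcard)
    refine ⟨fun _ => none, ?_, ?_⟩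
    · intro t; simp [hBe]
    · intro u; simp
  | @insert a S' ha ih =>
    intro B hB hcard
    rw [Finset.sum_insert ha] at hcard
    obtain ⟨B₁, hB₁sub, hB₁card⟩ := Finset.exists_subset_card_eq (by omega : ν a ≤ B.card)
    set B₂ := B \ B₁ with hB₂def
    have hB₂card : B₂.card = ∑ u ∈ S', ν u := by
      rw [Finset.card_sdiff_of_subset hB₁sub]; omega
    obtain ⟨σ', hbusy', hcount'⟩ := ih B₂ ((Finset.sdiff_subset).trans hB) hB₂card
    refine ⟨fun t => if t ∈ B₁ then some a else σ' t, ?_, ?_⟩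
    · intro t
      by_cases ht : t ∈ B₁
      · simp only [ht, if_pos]
        simp [hB₁sub ht]
      · simp only [ht, if_neg, not_false_iff]
        rw [hbusy' t]
        simp [hB₂def, Finset.mem_sdiff, ht]
    · intro u
      by_cases hu : u = a
      · subst hu
        have hfe : (Finset.Icc 1 T).filter
            (fun t => (if t ∈ B₁ then some u else σ' t) = some u) = B₁ := by
          ext t
          simp only [Finset.mem_filter]
          constructor
          · rintro ⟨htT, hval⟩
            by_contra ht
            rw [if_neg ht] at hval
            have hmem : t ∈ (Finset.Icc 1 T).filter (fun t => σ' t = some u) :=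
              Finset.mem_filter.mpr ⟨htT, hval⟩
            have := hcount' u
            rw [if_neg ha] at this
            rw [Finset.card_eq_zero.mp this] at hmem
            exact absurd hmem (Finset.notMem_empty t)
          · intro ht
            exact ⟨hB (hB₁sub ht), by rw [if_pos ht]⟩
        rw [hfe, hB₁card, if_pos (Finset.mem_insert_self u S')]
      · have hfe : (Finset.Icc 1 T).filter
            (fun t => (if t ∈ B₁ then some a else σ' t) = some u)
            = (Finset.Icc 1 T).filter (fun t => σ' t = some u) := by
          apply Finset.filter_congr
          intro t htT
          by_cases ht : t ∈ B₁
          · rw [if_pos ht]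
            have hnone : σ' t = none := by
              by_contra hc
              have : t ∈ B₂ := (hbusy' t).mp hc
              rw [hB₂def, Finset.mem_sdiff] at this
              exact this.2 ht
            simp [hnone, hu, Ne.symm hu]
          · rw [if_neg ht]
        rw [hfe, hcount' u]
        simp [Finset.mem_insert, hu]

/-- Optimality of ALG-SCSB₂ for common deadlines: the maximum number of served users
equals the largest `k ∈ {0,…,U}` such that the sum of the `k` smallest processing
requirements is at most the maximum cumulative capacity `Λ(A)` (`e` sorts `ν` in
nondecreasing order). -/
theorem stmt7 (T U : ℕ) (ν d : Fin U → ℕ) (A : ℕ → ℕ)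
    (hν : ∀ i, 1 ≤ ν i) (hd : ∀ u, d u = T)
    (Λ : ℕ)
    (hΛ : IsGreatest {n : ℕ | ∃ B ⊆ Finset.Icc 1 T, B.card = n ∧
      ∀ t ∈ Finset.Icc 1 T, (B ∩ Finset.Icc 1 t).card ≤ ∑ s ∈ Finset.Icc 1 t, A s} Λ)
    (e : Equiv.Perm (Fin U)) (he : Monotone (ν ∘ e)) :
    ∃ m : ℕ,
      IsGreatest {n : ℕ | ∃ S : Finset (Fin U), Feasible T U ν d A S ∧ S.card = n} m ∧
      IsGreatest {k : ℕ | k ≤ U ∧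
        (∑ i ∈ Finset.univ.filter (fun i : Fin U => (i : ℕ) < k), ν (e i)) ≤ Λ} m := by
  classical
  set P : ℕ → ℕ := fun k => ∑ i ∈ Finset.univ.filter (fun i : Fin U => (i : ℕ) < k), ν (e i)
    with hP
  set m : ℕ := Nat.findGreatest (fun k => P k ≤ Λ) U with hm
  have hm_le : m ≤ U := Nat.findGreatest_le U
  have hP0 : P 0 ≤ Λ := by
    simp [hP]
  have hPm : P m ≤ Λ := Nat.findGreatest_spec (P := fun k => P k ≤ Λ) (Nat.zero_le U) hP0
  have hgreatest : ∀ k, k ≤ U → P k ≤ Λ → k ≤ m := by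
    intro k hkU hk
    by_contra hc
    push_neg at hc
    rw [hm] at hc
    exact Nat.findGreatest_is_greatest (P := fun k => P k ≤ Λ) hc hkU hk
  -- cardinality of the index prefix
  have hfiltercard : (Finset.univ.filter (fun i : Fin U => (i : ℕ) < m)).card = m := by
    have : Finset.univ.filter (fun i : Fin U => (i : ℕ) < m)
        = Finset.map (Fin.castLEEmb hm_le) Finset.univ := by
      ext i
      simp only [Finset.mem_filter, Finset.mem_univ, true_and, Finset.mem_map,
        Fin.castLEEmb, Function.Embedding.coeFn_mk]
      constructor
      · intro hi
        exact ⟨⟨(i : ℕ), hi⟩, by simp [Fin.castLE, Fin.ext_iff]⟩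
      · rintro ⟨j, rfl⟩
        simpa using j.isLt
    rw [this, Finset.card_map, Finset.card_univ, Fintype.card_fin]
  -- the feasible set achieving m
  set S₀ : Finset (Fin U) := (Finset.univ.filter (fun i : Fin U => (i : ℕ) < m)).image e
    with hS₀
  have hS₀card : S₀.card = m := by
    rw [hS₀, Finset.card_image_of_injective _ e.injective, hfiltercard]
  have hS₀sum : ∑ u ∈ S₀, ν u = P m := by
    rw [hS₀, Finset.sum_image (fun x _ y _ h => e.injective h)]
  -- feasibility of S₀
  have hfeas : Feasible T U ν d A S₀ := by
    obtain ⟨B, hBsub, hBcard, hBcons⟩ := hΛ.1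
    obtain ⟨B', hB'sub, hB'card⟩ := Finset.exists_subset_card_eq (by omega : P m ≤ B.card)
    obtain ⟨σ, h1, h2⟩ := exists_schedule ν S₀ B' (hB'sub.trans hBsub)
      (by rw [hB'card, hS₀sum])
    refine ⟨σ, ?_, ?_, ?_, ?_⟩
    · intro u
      constructor
      · intro hu
        have := h2 u
        rw [if_pos hu] at this
        have hpos : 0 < ((Finset.Icc 1 T).filter (fun t => σ t = some u)).card := by
          rw [this]; exact hν u
        obtain ⟨t, ht⟩ := Finset.card_pos.mp hpos
        rw [Finset.mem_filter] at ht
        exact ⟨t, ht.1, ht.2⟩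
      · rintro ⟨t, htT, hσ⟩
        by_contra hu
        have := h2 u
        rw [if_neg hu] at this
        have : t ∈ (∅ : Finset ℕ) := by
          rw [← Finset.card_eq_zero.mp this]
          exact Finset.mem_filter.mpr ⟨htT, hσ⟩
        exact absurd this (Finset.notMem_empty t)
    · intro u hu
      have := h2 u
      rwa [if_pos hu] at this
    · intro u t ht _
      rw [hd]
      exact (Finset.mem_Icc.mp ht).2
    · intro t htT
      have hsub : (Finset.Icc 1 t).filter (fun s => σ s ≠ none) ⊆ B ∩ Finset.Icc 1 t := by
        intro s hs
        rw [Finset.mem_filter] at hs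
        exact Finset.mem_inter.mpr ⟨hB'sub ((h1 s).mp hs.2), hs.1⟩
      exact le_trans (Finset.card_le_card hsub) (hBcons t htT)
  -- upper bound: every feasible cardinality is at most m
  have hub : ∀ n ∈ {n : ℕ | ∃ S : Finset (Fin U), Feasible T U ν d A S ∧ S.card = n},
      n ≤ m := by
    rintro n ⟨S, ⟨σ, h1, h2, _h3, h4⟩, rfl⟩
    set B : Finset ℕ := (Finset.Icc 1 T).filter (fun s => σ s ≠ none) with hB
    have hBmem : B.card ∈ {n : ℕ | ∃ B ⊆ Finset.Icc 1 T, B.card = n ∧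
        ∀ t ∈ Finset.Icc 1 T, (B ∩ Finset.Icc 1 t).card ≤ ∑ s ∈ Finset.Icc 1 t, A s} := by
      refine ⟨B, Finset.filter_subset _ _, rfl, ?_⟩
      intro t htT
      have heq : B ∩ Finset.Icc 1 t = (Finset.Icc 1 t).filter (fun s => σ s ≠ none) := by
        ext s
        simp only [hB, Finset.mem_inter, Finset.mem_filter, Finset.mem_Icc]
        have htT' := Finset.mem_Icc.mp htT
        constructor
        · rintro ⟨⟨_, hs⟩, hst⟩
          exact ⟨hst, hs⟩
        · rintro ⟨⟨h1s, h2s⟩, hs⟩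
          exact ⟨⟨⟨h1s, le_trans h2s htT'.2⟩, hs⟩, h1s, h2s⟩
      rw [heq]
      exact h4 t htT
    have hBΛ : B.card ≤ Λ := hΛ.2 hBmem
    have hBsum : B.card = ∑ u ∈ S, ν u := by
      have hBeq : B = S.biUnion (fun u => (Finset.Icc 1 T).filter (fun t => σ t = some u)) := by
        ext s
        simp only [hB, Finset.mem_filter, Finset.mem_biUnion]
        constructor
        · rintro ⟨hsT, hs⟩
          obtain ⟨u, hu⟩ := Option.ne_none_iff_exists'.mp hs
          exact ⟨u, (h1 u).mpr ⟨s, hsT, hu⟩, hsT, hu⟩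
        · rintro ⟨u, _, hsT, hs⟩
          exact ⟨hsT, by rw [hs]; simp⟩
      rw [hBeq, Finset.card_biUnion]
      · exact Finset.sum_congr rfl (fun u hu => h2 u hu)
      · intro x _ y _ hxy
        simp only [Finset.disjoint_left, Finset.mem_filter]
        rintro s ⟨_, hs1⟩ ⟨_, hs2⟩
        rw [hs1] at hs2
        exact hxy (Option.some_injective _ hs2)
    have hSsum : ∑ u ∈ S, ν u = ∑ i ∈ S.image e.symm, (ν ∘ e) i := by
      rw [Finset.sum_image (fun x _ y _ h => e.symm.injective h)]
      simp
    have hcard' : (S.image e.symm).card = S.card :=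
      Finset.card_image_of_injective _ e.symm.injective
    have hle : P S.card ≤ ∑ u ∈ S, ν u := by
      rw [hSsum]
      exact sum_smallest_le (ν ∘ e) he (S.image e.symm) hcard'
    have hSU : S.card ≤ U := by simpa using Finset.card_le_univ S
    exact hgreatest S.card hSU (by omega)
  exact ⟨m, ⟨⟨S₀, hfeas, hS₀card⟩, hub⟩, ⟨⟨hm_le, hPm⟩, fun k hk => hgreatest k hk.1 hk.2⟩⟩
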